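/- Let s ↦ A(s) be a continuous map from the extended real line [−∞,∞] into ℓ×ℓ real matrices such that ρ(A(s)) < c for all s, where c ∈ (0,1). Then there exists κ > 0 such that ‖A(s)^n‖ < κ c^n for every s ∈ ℝ and every n ∈ ℕ. -/

import Mathlib

open Filter ENNReal


lemma gelfand_exists {A : Type*} [NormedRing A] [NormedAlgebra ℂ A] [CompleteSpace A]
    (a : A) (c : ℝ) (hc : 0 < c) (h : ∀ z ∈ spectrum ℂ a, ‖z‖ < c) :
    ∃ N : ℕ, 1 ≤ N ∧ ‖a ^ N‖ < c ^ N := by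
  rcases subsingleton_or_nontrivial A with hs | hn
  · exact ⟨1, le_refl _, by rw [Subsingleton.elim (a ^ 1) 0]; simpa using pow_pos hc 1⟩
  · have hr : spectralRadius ℂ a < (c.toNNReal : ℝ≥0∞) := by
      refine spectrum.spectralRadius_lt_of_forall_lt a fun z hz => ?_
      have h1 := h z hz
      have : (‖z‖₊ : ℝ) < (c.toNNReal : ℝ) := by
        simpa [Real.coe_toNNReal c hc.le] using h1
      exact_mod_cast this
    have htt := spectrum.pow_nnnorm_pow_one_div_tendsto_nhds_spectralRadius a
    have hev : ∀ᶠ n : ℕ in atTop,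
        ((‖a ^ n‖₊ : ℝ≥0∞)) ^ (1 / (n:ℝ)) < (c.toNNReal : ℝ≥0∞) :=
      htt.eventually_lt_const hr
    obtain ⟨N, hN1, hN⟩ : ∃ N : ℕ, 1 ≤ N ∧
        ((‖a ^ N‖₊ : ℝ≥0∞)) ^ (1 / (N:ℝ)) < (c.toNNReal : ℝ≥0∞) := by
      rcases ((eventually_ge_atTop 1).and hev).exists with ⟨N, hN⟩
      exact ⟨N, hN.1, hN.2⟩
    have hNpos : (0:ℝ) < N := by exact_mod_cast hN1
    have hpow := ENNReal.rpow_lt_rpow hN hNpos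
    rw [← ENNReal.rpow_mul, one_div_mul_cancel (ne_of_gt hNpos), ENNReal.rpow_one,
      ENNReal.rpow_natCast] at hpow
    refine ⟨N, hN1, ?_⟩
    have h2 : ‖a ^ N‖₊ < c.toNNReal ^ N := by
      rw [← ENNReal.coe_pow] at hpow; exact_mod_cast hpow
    have h3 := NNReal.coe_lt_coe.mpr h2
    simpa [Real.coe_toNNReal c hc.le] using h3


lemma real_opNorm_le (ℓ : ℕ) (M : Matrix (Fin ℓ) (Fin ℓ) ℝ) :
    ‖Matrix.toEuclideanCLM (𝕜:=ℝ) M‖ ≤ ‖Matrix.toEuclideanCLM (𝕜:=ℂ) (M.map Complex.ofReal)‖ := by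
  refine ContinuousLinearMap.opNorm_le_bound _ (norm_nonneg _) fun v => ?_
  set jv : EuclideanSpace ℂ (Fin ℓ) := (WithLp.equiv 2 _).symm (fun i => (v i : ℂ)) with hjv
  have hnv : ‖jv‖ = ‖v‖ := by
    simp [EuclideanSpace.norm_eq, hjv]
  have hcoord : ∀ (w : EuclideanSpace ℝ (Fin ℓ)) (i : Fin ℓ),
      (Matrix.toEuclideanCLM (𝕜:=ℝ) M w) i = ∑ k, M i k * w k := by
    intro w i
    have : WithLp.equiv 2 _ (Matrix.toEuclideanCLM (𝕜:=ℝ) M w)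
        = Matrix.toLin' M (WithLp.equiv 2 _ w) := Matrix.ofLp_toEuclideanCLM M w
    have h2 := congrFun this i
    simpa [Matrix.toLin'_apply, Matrix.mulVec, dotProduct] using h2
  have happ : Matrix.toEuclideanCLM (𝕜:=ℂ) (M.map Complex.ofReal) jv
      = (WithLp.equiv 2 _).symm (fun i => ((Matrix.toEuclideanCLM (𝕜:=ℝ) M v) i : ℂ)) := by
    apply (WithLp.equiv 2 _).injective
    ext i
    simp [hjv, Matrix.toLin'_apply, Matrix.mulVec, dotProduct, hcoord]
  have := (Matrix.toEuclideanCLM (𝕜:=ℂ) (M.map Complex.ofReal)).le_opNorm jv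
  rw [happ, hnv] at this
  calc ‖Matrix.toEuclideanCLM (𝕜:=ℝ) M v‖
      = ‖(WithLp.equiv 2 _).symm (fun i => ((Matrix.toEuclideanCLM (𝕜:=ℝ) M v) i : ℂ))‖ := by
        simp [EuclideanSpace.norm_eq]
    _ ≤ _ := this


lemma cont_toCLM (ℓ : ℕ) : Continuous
    (fun M : Matrix (Fin ℓ) (Fin ℓ) ℝ => Matrix.toEuclideanCLM (𝕜:=ℝ) M) := by
  let L : Matrix (Fin ℓ) (Fin ℓ) ℝ →ₗ[ℝ]
      (EuclideanSpace ℝ (Fin ℓ) →L[ℝ] EuclideanSpace ℝ (Fin ℓ)) :=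
    { toFun := fun M => Matrix.toEuclideanCLM (𝕜:=ℝ) M
      map_add' := fun x y => map_add _ x y
      map_smul' := fun r x => map_smul (Matrix.toEuclideanCLM (𝕜:=ℝ)) r x }
  exact L.continuous_of_finiteDimensional

lemma cont_psi (ℓ : ℕ) (N : ℕ) : Continuous
    (fun M : Matrix (Fin ℓ) (Fin ℓ) ℝ => ‖(Matrix.toEuclideanCLM (𝕜:=ℝ) M) ^ N‖) :=
  (((cont_toCLM ℓ).pow N).norm)


lemma aux_pow_bound {A : Type*} [NormedRing A] (h1 : ‖(1:A)‖ ≤ 1)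
    (c M : ℝ) (hc : 0 < c) (hM : 0 ≤ M) (Nmax : ℕ) (g : A) (hg : ‖g‖ ≤ M)
    (N : ℕ) (hN1 : 1 ≤ N) (hNmax : N ≤ Nmax) (hgN : ‖g ^ N‖ ≤ c ^ N) :
    ∀ n : ℕ, ‖g ^ n‖ ≤ (max 1 (M / c)) ^ Nmax * c ^ n := by
  have hb1 : (1:ℝ) ≤ max 1 (M / c) := le_max_left _ _
  have hκ1 : (1:ℝ) ≤ (max 1 (M / c)) ^ Nmax := one_le_pow₀ hb1
  intro n
  induction n using Nat.strong_induction_on with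
  | _ n ih =>
    rcases lt_or_ge n N with hlt | hge
    · -- n < N ≤ Nmax : use ‖g^n‖ ≤ M^n
      have hn : ‖g ^ n‖ ≤ M ^ n := by
        cases n with
        | zero => simpa using h1
        | succ k =>
          calc ‖g ^ (k+1)‖ ≤ ‖g‖ ^ (k+1) := norm_pow_le' g (Nat.succ_pos k)
            _ ≤ M ^ (k+1) := pow_le_pow_left₀ (norm_nonneg g) hg _
      have key : M ^ n ≤ (max 1 (M / c)) ^ Nmax * c ^ n := by
        have h2 : M ^ n = (M / c) ^ n * c ^ n := by
          rw [div_pow, div_mul_cancel₀ _ (pow_ne_zero n hc.ne')]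
        rw [h2]
        have h3 : (M / c) ^ n ≤ (max 1 (M / c)) ^ n :=
          pow_le_pow_left₀ (by positivity) (le_max_right _ _) n
        have h4 : (max 1 (M / c)) ^ n ≤ (max 1 (M / c)) ^ Nmax :=
          pow_le_pow_right₀ hb1 (le_trans hlt.le hNmax)
        have := le_trans h3 h4
        exact mul_le_mul_of_nonneg_right this (by positivity)
      exact hn.trans key
    · -- n ≥ N : split
      have hsplit : n = N + (n - N) := (Nat.add_sub_cancel' hge).symm
      have hrec : n - N < n := Nat.sub_lt (lt_of_lt_of_le hN1 hge) hN1
      calc ‖g ^ n‖ = ‖g ^ N * g ^ (n - N)‖ := by rw [← pow_add, ← hsplit]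
        _ ≤ ‖g ^ N‖ * ‖g ^ (n - N)‖ := norm_mul_le _ _
        _ ≤ c ^ N * ((max 1 (M / c)) ^ Nmax * c ^ (n - N)) := by
            apply mul_le_mul hgN (ih _ hrec) (norm_nonneg _) (by positivity)
        _ = (max 1 (M / c)) ^ Nmax * (c ^ N * c ^ (n - N)) := by ring
        _ = (max 1 (M / c)) ^ Nmax * c ^ n := by rw [← pow_add, ← hsplit]

lemma map_pow_ofReal (ℓ : ℕ) (M : Matrix (Fin ℓ) (Fin ℓ) ℝ) (N : ℕ) :
    (M.map Complex.ofReal) ^ N = (M ^ N).map Complex.ofReal := by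
  have h1 : M.map Complex.ofReal = Complex.ofRealHom.mapMatrix M := rfl
  have h2 : (M ^ N).map Complex.ofReal = Complex.ofRealHom.mapMatrix (M ^ N) := rfl
  rw [h1, h2, map_pow]

lemma gelfand_matrix (ℓ : ℕ) (c : ℝ) (hc0 : 0 < c) (M : Matrix (Fin ℓ) (Fin ℓ) ℝ)
    (h : ∀ μ ∈ spectrum ℂ (M.map Complex.ofReal), ‖μ‖ < c) :
    ∃ N : ℕ, 1 ≤ N ∧ ‖(Matrix.toEuclideanCLM (𝕜:=ℝ) M) ^ N‖ < c ^ N := by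
  set a := Matrix.toEuclideanCLM (𝕜:=ℂ) (M.map Complex.ofReal) with ha
  have hsp : ∀ z ∈ spectrum ℂ a, ‖z‖ < c := by
    intro z hz
    rw [ha, AlgEquiv.spectrum_eq] at hz
    exact h z hz
  obtain ⟨N, hN1, hN⟩ := gelfand_exists a c hc0 hsp
  refine ⟨N, hN1, lt_of_le_of_lt ?_ hN⟩
  have h1 : (Matrix.toEuclideanCLM (𝕜:=ℝ) M) ^ N = Matrix.toEuclideanCLM (𝕜:=ℝ) (M ^ N) :=
    (map_pow _ M N).symm
  have h2 : a ^ N = Matrix.toEuclideanCLM (𝕜:=ℂ) ((M ^ N).map Complex.ofReal) := by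
    rw [ha, ← map_pow, map_pow_ofReal]
  rw [h1, h2]
  exact real_opNorm_le ℓ (M ^ N)

/-- Uniformity Lemma: if `s ↦ A(s)` is continuous on the extended real
line (i.e. continuous on `ℝ` with matrix limits `A₋, A₊` at `∓∞`) and every value has
all complex eigenvalues of modulus `< c` (with `c ∈ (0,1)`), then there is `κ > 0`
with `‖A(s)^n‖ < κ cⁿ` (Euclidean operator norm) for all `s ∈ ℝ`, `n ∈ ℕ`. -/
theorem stmt7 (ℓ : ℕ) (A : ℝ → Matrix (Fin ℓ) (Fin ℓ) ℝ) (hA : Continuous A)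
    (Ap Am : Matrix (Fin ℓ) (Fin ℓ) ℝ)
    (hAp : Tendsto A atTop (nhds Ap)) (hAm : Tendsto A atBot (nhds Am))
    (c : ℝ) (hc0 : 0 < c) (hc1 : c < 1)
    (hspec : ∀ s : ℝ, ∀ μ ∈ spectrum ℂ ((A s).map Complex.ofReal), ‖μ‖ < c)
    (hspecp : ∀ μ ∈ spectrum ℂ (Ap.map Complex.ofReal), ‖μ‖ < c)
    (hspecm : ∀ μ ∈ spectrum ℂ (Am.map Complex.ofReal), ‖μ‖ < c) :
    ∃ κ > (0:ℝ), ∀ (s : ℝ) (n : ℕ),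
      ‖(Matrix.toEuclideanCLM (𝕜 := ℝ) (A s)) ^ n‖ < κ * c ^ n := by
  classical
  set ψ : ℕ → Matrix (Fin ℓ) (Fin ℓ) ℝ → ℝ :=
    fun N M => ‖(Matrix.toEuclideanCLM (𝕜:=ℝ) M) ^ N‖ with hψ
  have hψc : ∀ N, Continuous (ψ N) := fun N => cont_psi ℓ N
  -- limits of ψ N ∘ A
  have http : ∀ N, Tendsto (fun s => ψ N (A s)) atTop (nhds (ψ N Ap)) :=
    fun N => ((hψc N).tendsto Ap).comp hAp
  have httm : ∀ N, Tendsto (fun s => ψ N (A s)) atBot (nhds (ψ N Am)) :=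
    fun N => ((hψc N).tendsto Am).comp hAm
  -- Gelfand at the two endpoints
  obtain ⟨Np, hNp1, hNp⟩ := gelfand_matrix ℓ c hc0 Ap hspecp
  obtain ⟨Nm, hNm1, hNm⟩ := gelfand_matrix ℓ c hc0 Am hspecm
  obtain ⟨Sp, hSp⟩ := (eventually_atTop.mp ((http Np).eventually_lt_const hNp))
  obtain ⟨Sm, hSm⟩ := (eventually_atBot.mp ((httm Nm).eventually_lt_const hNm))
  -- uniform bound on ‖A s‖ (operator norm)
  obtain ⟨Sp', hSp'⟩ := (eventually_atTop.mp
    ((http 1).eventually_lt_const (lt_add_one (ψ 1 Ap))))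
  obtain ⟨Sm', hSm'⟩ := (eventually_atBot.mp
    ((httm 1).eventually_lt_const (lt_add_one (ψ 1 Am))))
  set a : ℝ := min Sm Sm' with haa
  set b : ℝ := max Sp Sp' with hbb
  obtain ⟨C, hC⟩ := (isCompact_Icc (a := a) (b := b)).exists_bound_of_continuousOn
    (((hψc 1).comp hA)).continuousOn
  set M₁ : ℝ := max (max C (max (ψ 1 Ap + 1) (ψ 1 Am + 1))) 0 with hM₁
  have hM₁0 : 0 ≤ M₁ := le_max_right _ _
  have hbound : ∀ s : ℝ, ‖Matrix.toEuclideanCLM (𝕜:=ℝ) (A s)‖ ≤ M₁ := by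
    intro s
    have hps : ‖Matrix.toEuclideanCLM (𝕜:=ℝ) (A s)‖ = ψ 1 (A s) := by
      simp only [hψ, pow_one]
    rw [hps]
    rcases le_or_gt s a with h1 | h1
    · have := hSm' s (le_trans h1 (min_le_right _ _))
      exact le_trans this.le (le_trans (le_max_of_le_right (le_max_right _ _))
        (le_max_left _ _))
    rcases le_or_gt s b with h2 | h2
    · have hmem : s ∈ Set.Icc a b := ⟨h1.le, h2⟩
      have := hC s hmem
      exact le_trans (le_abs_self _) (le_trans this
        (le_trans (le_max_left _ _) (le_max_left _ _)))
    · have := hSp' s (le_trans (le_max_right _ _) h2.le)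
      exact le_trans this.le (le_trans (le_max_of_le_right (le_max_left _ _))
        (le_max_left _ _))
  -- choose exponents pointwise
  have hgel : ∀ s : ℝ, ∃ N : ℕ, 1 ≤ N ∧ ψ N (A s) < c ^ N :=
    fun s => gelfand_matrix ℓ c hc0 (A s) (hspec s)
  choose Nfun hN1 hN2 using hgel
  -- compact middle part for the exponents
  set U : ℝ → Set ℝ := fun x => {t | ψ (Nfun x) (A t) < c ^ (Nfun x)} with hU
  have hUopen : ∀ x, IsOpen (U x) := by
    intro x
    exact isOpen_lt ((hψc (Nfun x)).comp hA) continuous_const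
  have hUmem : ∀ x ∈ Set.Icc Sm Sp, U x ∈ nhds x := by
    intro x _
    exact (hUopen x).mem_nhds (hN2 x)
  obtain ⟨t, -, hcover⟩ :=
    (isCompact_Icc (a := Sm) (b := Sp)).elim_nhds_subcover U hUmem
  set Nmax : ℕ := max (max Np Nm) (t.sup Nfun) with hNmax
  -- combined claim
  have hcomb : ∀ s : ℝ, ∃ N : ℕ, 1 ≤ N ∧ N ≤ Nmax ∧ ψ N (A s) < c ^ N := by
    intro s
    rcases le_or_gt s Sm with h1 | h1
    · exact ⟨Nm, hNm1, le_trans (le_max_right _ _) (le_max_left _ _), hSm s h1⟩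
    rcases le_or_gt Sp s with h2 | h2
    · exact ⟨Np, hNp1, le_trans (le_max_left _ _) (le_max_left _ _), hSp s h2⟩
    · have hmem : s ∈ Set.Icc Sm Sp := ⟨h1.le, h2.le⟩
      have := hcover hmem
      simp only [Set.mem_iUnion] at this
      obtain ⟨x, hx, hsx⟩ := this
      exact ⟨Nfun x, hN1 x, le_trans (Finset.le_sup hx) (le_max_right _ _), hsx⟩
  -- final constant
  set κ₀ : ℝ := (max 1 (M₁ / c)) ^ Nmax with hκ₀
  have hκ₀1 : (1:ℝ) ≤ κ₀ := one_le_pow₀ (le_max_left _ _)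
  refine ⟨κ₀ + 1, by linarith, ?_⟩
  intro s n
  obtain ⟨N, h1, h2, h3⟩ := hcomb s
  have key := aux_pow_bound (A := EuclideanSpace ℝ (Fin ℓ) →L[ℝ] EuclideanSpace ℝ (Fin ℓ))
    (ContinuousLinearMap.opNorm_le_bound _ zero_le_one (fun x => by simp))
    c M₁ hc0 hM₁0 Nmax (Matrix.toEuclideanCLM (𝕜:=ℝ) (A s)) (hbound s)
    N h1 h2 h3.le n
  have hcn : (0:ℝ) < c ^ n := pow_pos hc0 n
  calc ‖(Matrix.toEuclideanCLM (𝕜 := ℝ) (A s)) ^ n‖ ≤ κ₀ * c ^ n := key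
    _ < (κ₀ + 1) * c ^ n := by nlinarith
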